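/- For p ≠ q with p, q ∈ (0,1), and aₙ := 2^{1−n}, the Gini mean satisfies limₙ G_{p,q}(a₁,…,aₙ) = ((1−2^{−q})/(1−2^{−p}))^{1/(p−q)} > 0; consequently G_{p,q} is not a weak-Hardy mean. -/
import Mathlib


open Finset in
/-- The Gini mean `G_{p,q}` of a tuple of positive reals. -/
noncomputable def gini (p q : ℝ) (n : ℕ) (a : Fin n → ℝ) : ℝ :=
  if p = q then
    Real.exp ((∑ i, a i ^ p * Real.log (a i)) / (∑ i, a i ^ p))
  else
    ((∑ i, a i ^ p) / (∑ i, a i ^ q)) ^ (1 / (p - q))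

theorem stmt_7 (p q : ℝ) (hp : p ∈ Set.Ioo (0:ℝ) 1) (hq : q ∈ Set.Ioo (0:ℝ) 1)
    (hpq : p ≠ q) (a : ℕ → ℝ) (ha : ∀ n, a n = (2 : ℝ) ^ (-(n : ℤ))) :
    Filter.Tendsto (fun n => gini p q (n + 1) (fun k : Fin (n + 1) => a (k : ℕ)))
      Filter.atTop
      (nhds (((1 - (2:ℝ) ^ (-q)) / (1 - (2:ℝ) ^ (-p))) ^ (1 / (p - q)))) ∧
    0 < ((1 - (2:ℝ) ^ (-q)) / (1 - (2:ℝ) ^ (-p))) ^ (1 / (p - q)) ∧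
    ∃ c : ℕ → ℝ, (∀ n, 0 < c n) ∧ Summable c ∧
      ¬ Summable (fun n => gini p q (n + 1) (fun k : Fin (n + 1) => c (k : ℕ))) := by
  obtain ⟨hp0, hp1⟩ := hp
  obtain ⟨hq0, hq1⟩ := hq
  have h2 : (0:ℝ) < 2 := two_pos
  have hrpos : ∀ r : ℝ, 0 < r → 0 < (2:ℝ)^(-r) ∧ (2:ℝ)^(-r) < 1 := fun r hr =>
    ⟨Real.rpow_pos_of_pos h2 _,
     Real.rpow_lt_one_of_one_lt_of_neg one_lt_two (by linarith)⟩
  have hsum : ∀ r : ℝ, 0 < r → ∀ n : ℕ,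
      (∑ i : Fin (n+1), a (i:ℕ) ^ r) = (((2:ℝ)^(-r))^(n+1) - 1)/((2:ℝ)^(-r) - 1) := by
    intro r hr n
    have hne : (2:ℝ)^(-r) ≠ 1 := ne_of_lt (hrpos r hr).2
    rw [Fin.sum_univ_eq_sum_range (fun k => a k ^ r), ← geom_sum_eq hne]
    refine Finset.sum_congr rfl fun k _ => ?_
    rw [ha k]
    rw [show ((2:ℝ) ^ (-(k:ℤ))) = (2:ℝ) ^ (-(k:ℝ)) from by
      rw [← Real.rpow_intCast]; push_cast; ring_nf]
    rw [← Real.rpow_natCast ((2:ℝ)^(-r)) k, ← Real.rpow_mul h2.le, ← Real.rpow_mul h2.le]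
    congr 1
    ring
  have hT : ∀ r : ℝ, 0 < r → Filter.Tendsto (fun n => ∑ i : Fin (n+1), a (i:ℕ) ^ r)
      Filter.atTop (nhds (1/(1 - (2:ℝ)^(-r)))) := by
    intro r hr
    obtain ⟨h0, h1⟩ := hrpos r hr
    have hx : Filter.Tendsto (fun n : ℕ => ((2:ℝ)^(-r))^(n+1)) Filter.atTop (nhds 0) :=
      (tendsto_pow_atTop_nhds_zero_of_lt_one h0.le h1).comp
        (Filter.tendsto_add_atTop_nat 1)
    have key := (hx.sub_const 1).div_const ((2:ℝ)^(-r) - 1)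
    have hne : (2:ℝ)^(-r) - 1 ≠ 0 := sub_ne_zero.mpr (ne_of_lt h1)
    have heq : (0 - 1) / ((2:ℝ)^(-r) - 1) = 1/(1 - (2:ℝ)^(-r)) := by
      rw [zero_sub, div_eq_div_iff hne (sub_ne_zero.mpr h1.ne')]; ring
    rw [heq] at key
    exact Filter.Tendsto.congr (fun n => (hsum r hr n).symm) key
  have hLq : 0 < 1 - (2:ℝ)^(-q) := sub_pos.mpr (hrpos q hq0).2
  have hLp : 0 < 1 - (2:ℝ)^(-p) := sub_pos.mpr (hrpos p hp0).2
  have hLpos : 0 < (1 - (2:ℝ)^(-q))/(1 - (2:ℝ)^(-p)) := div_pos hLq hLp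
  have hratio : Filter.Tendsto
      (fun n => (∑ i : Fin (n+1), a (i:ℕ) ^ p)/(∑ i : Fin (n+1), a (i:ℕ) ^ q))
      Filter.atTop (nhds ((1 - (2:ℝ)^(-q))/(1 - (2:ℝ)^(-p)))) := by
    have := (hT p hp0).div (hT q hq0) (by positivity)
    have heq : (1/(1 - (2:ℝ)^(-p)))/(1/(1 - (2:ℝ)^(-q)))
        = (1 - (2:ℝ)^(-q))/(1 - (2:ℝ)^(-p)) := by
      have h1 := hLp.ne'
      have h2 := hLq.ne'
      field_simp
    rw [heq] at this
    exact this
  have hmain : Filter.Tendsto (fun n => gini p q (n + 1) (fun k : Fin (n + 1) => a (k : ℕ)))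
      Filter.atTop
      (nhds (((1 - (2:ℝ) ^ (-q)) / (1 - (2:ℝ) ^ (-p))) ^ (1 / (p - q)))) := by
    have := Filter.Tendsto.rpow_const (p := 1/(p-q)) hratio (Or.inl (ne_of_gt hLpos))
    simpa [gini, if_neg hpq] using this
  have hpos : 0 < ((1 - (2:ℝ) ^ (-q)) / (1 - (2:ℝ) ^ (-p))) ^ (1 / (p - q)) :=
    Real.rpow_pos_of_pos hLpos _
  refine ⟨hmain, hpos, a, ?_, ?_, ?_⟩
  · intro n; rw [ha n]; positivity
  · have : ∀ n : ℕ, a n = (2⁻¹ : ℝ)^n := by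
      intro n; rw [ha n, zpow_neg, zpow_natCast, inv_pow]
    exact (summable_geometric_of_lt_one (by norm_num) (by norm_num)).congr
      fun n => (this n).symm
  · intro hS
    have h0 := hS.tendsto_atTop_zero
    exact (ne_of_gt hpos) (tendsto_nhds_unique h0 hmain).symm
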